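/- Σ_{x∈X} Σ_{j=1}^{J} n_j(x)/N_{j−1}(x) ≤ (1 + 1/α)·M + (1 + 1/α)·M·log(T/M); moreover, if T/M ≥ e then this quantity is at most 2·(1 + 1/α)·M·log(T/M). -/

import Mathlib

lemma aux_log_ge (y : ℝ) (hy : 0 < y) : 1 - 1/y ≤ Real.log y := by
  have h := Real.log_le_sub_one_of_pos (show (0:ℝ) < 1/y by positivity)
  rw [one_div, Real.log_inv] at h
  rw [one_div]; linarith

lemma aux_key (α s a : ℝ) (hα : 1 ≤ α) (hs : 0 ≤ s) (ha : 0 ≤ a)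
    (ha' : a ≤ max 1 s / α) :
    a / max 1 s ≤ (1 + 1/α) *
      ((min 1 (s+a) - min 1 s) + (Real.log (max 1 (s+a)) - Real.log (max 1 s))) := by
  have hα0 : (0:ℝ) < α := lt_of_lt_of_le one_pos hα
  have hCα : 1/α ≤ 1 := by rw [div_le_one hα0]; exact hα
  have hC1 : (1:ℝ) ≤ 1 + 1/α := by nlinarith [one_div_pos.mpr hα0]
  rcases le_or_gt 1 s with h1 | h1
  · have hs0 : 0 < s := lt_of_lt_of_le one_pos h1
    rw [max_eq_right h1] at ha' ⊢
    rw [max_eq_right (by linarith : (1:ℝ) ≤ s + a),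
      min_eq_left h1, min_eq_left (by linarith : (1:ℝ) ≤ s + a)]
    set x := a / s with hxdef
    have hx0 : 0 ≤ x := by positivity
    have hx : x ≤ 1/α := by
      rw [hxdef, div_le_div_iff₀ hs0 hα0, one_mul]
      exact (le_div_iff₀ hα0).mp ha'
    have h1x : (0:ℝ) < 1 + x := by linarith
    have hlogeq : Real.log (s+a) - Real.log s = Real.log (1 + x) := by
      rw [← Real.log_div (by linarith) (ne_of_gt hs0)]
      rw [hxdef]
      field_simp
    have hl := aux_log_ge (1+x) h1x
    have hv : (1 - 1/(1+x)) * (1+x) = x := by field_simp; ring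
    have h2 : x ≤ (1 + 1/α) * (1 - 1/(1+x)) := by
      nlinarith [mul_le_mul_of_nonneg_left hx hx0]
    have h3 := mul_le_mul_of_nonneg_left hl (by positivity : (0:ℝ) ≤ 1 + 1/α)
    rw [hlogeq]
    linarith
  · rw [max_eq_left (le_of_lt h1)] at ha' ⊢
    rw [min_eq_right (le_of_lt h1), Real.log_one, div_one]
    rcases le_or_gt (s+a) 1 with h2 | h2
    · rw [min_eq_right h2, max_eq_left h2, Real.log_one]
      nlinarith
    · rw [min_eq_left (le_of_lt h2), max_eq_right (le_of_lt h2)]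
      have hl := aux_log_ge (s+a) (by linarith)
      have hv : (1 - 1/(s+a)) * (s+a) = s+a-1 := by field_simp
      have hvpos : 0 ≤ 1 - 1/(s+a) := by
        have : 1/(s+a) ≤ 1 := by rw [div_le_one (by linarith)]; linarith
        linarith
      have h3 := mul_le_mul_of_nonneg_left hl (by positivity : (0:ℝ) ≤ 1 + 1/α)
      nlinarith

lemma aux_sum_x (α : ℝ) (hα : 1 ≤ α) (J : ℕ) (m : ℕ → ℝ) (hm0 : m 0 = 0)
    (hm : ∀ j, 1 ≤ j → j ≤ J → 0 ≤ m j ∧ m j ≤ max 1 (∑ i ∈ Finset.range j, m i) / α) :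
    ∑ j ∈ Finset.Icc 1 J, m j / max 1 (∑ i ∈ Finset.range j, m i)
      ≤ (1 + 1/α) * (1 + Real.log (max 1 (∑ i ∈ Finset.range (J+1), m i))) := by
  have hα0 : (0:ℝ) < α := lt_of_lt_of_le one_pos hα
  have hC0 : (0:ℝ) ≤ 1 + 1/α := by positivity
  have hnn : ∀ i, i ≤ J → 0 ≤ m i := by
    intro i hi
    rcases Nat.eq_zero_or_pos i with h | h
    · simp [h, hm0]
    · exact (hm i h hi).1
  have hSnn : ∀ k, k ≤ J + 1 → 0 ≤ ∑ i ∈ Finset.range k, m i := by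
    intro k hk
    exact Finset.sum_nonneg fun i hi => hnn i (by
      have := Finset.mem_range.mp hi; omega)
  have key : ∀ k, k ≤ J → ∑ j ∈ Finset.Icc 1 k, m j / max 1 (∑ i ∈ Finset.range j, m i)
      ≤ (1 + 1/α) * (min 1 (∑ i ∈ Finset.range (k+1), m i)
        + Real.log (max 1 (∑ i ∈ Finset.range (k+1), m i))) := by
    intro k
    induction k with
    | zero => intro _; simp [hm0]
    | succ k ih =>
      intro hk
      have IH := ih (by omega)
      rw [Finset.sum_Icc_succ_top (by omega : 1 ≤ k+1)]
      have hkey := aux_key α (∑ i ∈ Finset.range (k+1), m i) (m (k+1)) hα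
        (hSnn _ (by omega)) (hm (k+1) (by omega) hk).1 (hm (k+1) (by omega) hk).2
      rw [Finset.sum_range_succ (n := k+1)]
      linarith
  have hfin := key J le_rfl
  have hmin : min 1 (∑ i ∈ Finset.range (J+1), m i) ≤ 1 := min_le_left _ _
  nlinarith [hfin, hmin]

/-- Let `α ≥ 1`, `X` finite nonempty with `|X| = M`, `J ≥ 1`. For each `x ∈ X` let
`n_0(x), …, n_J(x)` be reals with `n_0(x) = 0` and `0 ≤ n_j(x) ≤ N_{j−1}(x)/α` for `1 ≤ j ≤ J`,
where `N_j(x) = max 1 (∑_{i=0}^{j} n_i(x))`, and let `T` satisfy `∑_x N_J(x) ≤ T`. Then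
`∑_{x} ∑_{j=1}^{J} n_j(x)/N_{j−1}(x) ≤ (1 + 1/α)·M + (1 + 1/α)·M·log(T/M)`; moreover if
`T/M ≥ e` this is at most `2·(1 + 1/α)·M·log(T/M)`. -/
theorem stmt_14 {X : Type*} [Fintype X] [Nonempty X] (M : ℕ) (hM : Fintype.card X = M)
    (α : ℝ) (hα : 1 ≤ α) (J : ℕ) (hJ : 1 ≤ J)
    (n : X → ℕ → ℝ) (hn0 : ∀ x, n x 0 = 0)
    (N : X → ℕ → ℝ) (hN : ∀ x j, N x j = max 1 (∑ i ∈ Finset.range (j + 1), n x i))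
    (hn : ∀ x j, 1 ≤ j → j ≤ J → 0 ≤ n x j ∧ n x j ≤ N x (j - 1) / α)
    (T : ℝ) (hT : ∑ x, N x J ≤ T) :
    (∑ x, ∑ j ∈ Finset.Icc 1 J, n x j / N x (j - 1))
        ≤ (1 + 1 / α) * M + (1 + 1 / α) * M * Real.log (T / M)
      ∧ (Real.exp 1 ≤ T / M →
          (∑ x, ∑ j ∈ Finset.Icc 1 J, n x j / N x (j - 1))
            ≤ 2 * (1 + 1 / α) * M * Real.log (T / M)) := by
  have hα0 : (0:ℝ) < α := lt_of_lt_of_le one_pos hα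
  have hC0 : (0:ℝ) ≤ 1 + 1/α := by positivity
  have hMpos : 0 < M := by rw [← hM]; exact Fintype.card_pos
  have hMR : (0:ℝ) < M := by exact_mod_cast hMpos
  -- rewrite N (j-1) for j ≥ 1
  have hNrw : ∀ x j, 1 ≤ j → N x (j - 1) = max 1 (∑ i ∈ Finset.range j, n x i) := by
    intro x j hj
    rw [hN x (j-1), Nat.sub_add_cancel hj]
  -- per-x bound
  have hperx : ∀ x, ∑ j ∈ Finset.Icc 1 J, n x j / N x (j - 1)
      ≤ (1 + 1/α) * (1 + Real.log (N x J)) := by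
    intro x
    have heq : ∑ j ∈ Finset.Icc 1 J, n x j / N x (j - 1)
        = ∑ j ∈ Finset.Icc 1 J, n x j / max 1 (∑ i ∈ Finset.range j, n x i) := by
      refine Finset.sum_congr rfl fun j hj => ?_
      rw [hNrw x j (Finset.mem_Icc.mp hj).1]
    rw [heq, hN x J]
    exact aux_sum_x α hα J (n x) (hn0 x) (fun j h1 h2 => by
      have := hn x j h1 h2
      rwa [hNrw x j h1] at this)
  -- N x J ≥ 1 and positivity
  have hN1 : ∀ x, (1:ℝ) ≤ N x J := fun x => by rw [hN]; exact le_max_left _ _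
  have hsum1 : (M:ℝ) ≤ ∑ x, N x J := by
    calc (M:ℝ) = ∑ _x : X, (1:ℝ) := by simp [Finset.card_univ, hM]
    _ ≤ ∑ x, N x J := Finset.sum_le_sum fun x _ => hN1 x
  have hTM : (1:ℝ) ≤ T / M := by
    rw [le_div_iff₀ hMR]; linarith
  -- Jensen
  have hjensen : ∑ x, Real.log (N x J) ≤ M * Real.log (T / M) := by
    have hc : ConcaveOn ℝ (Set.Ioi 0) Real.log := strictConcaveOn_log_Ioi.concaveOn
    have h := hc.le_map_sum (t := Finset.univ) (w := fun _ : X => (M:ℝ)⁻¹)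
      (p := fun x => N x J) (fun i _ => by positivity)
      (by rw [Finset.sum_const, Finset.card_univ, hM, nsmul_eq_mul]
          field_simp)
      (fun i _ => Set.mem_Ioi.mpr (lt_of_lt_of_le one_pos (hN1 i)))
    simp only [smul_eq_mul] at h
    rw [← Finset.mul_sum, ← Finset.mul_sum] at h
    have hspos : (0:ℝ) < ∑ x, N x J := lt_of_lt_of_le hMR hsum1
    have harg : (0:ℝ) < (M:ℝ)⁻¹ * ∑ x, N x J := by positivity
    have h2 : Real.log ((M:ℝ)⁻¹ * ∑ x, N x J) ≤ Real.log (T / M) := by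
      apply Real.log_le_log harg
      rw [div_eq_inv_mul]
      exact mul_le_mul_of_nonneg_left hT (by positivity)
    have h3 : (M:ℝ)⁻¹ * ∑ x, Real.log (N x J) ≤ Real.log (T / M) := le_trans h h2
    calc ∑ x, Real.log (N x J) = M * ((M:ℝ)⁻¹ * ∑ x, Real.log (N x J)) := by
          field_simp
      _ ≤ M * Real.log (T / M) := mul_le_mul_of_nonneg_left h3 (le_of_lt hMR)
  -- combine
  have hmain : (∑ x, ∑ j ∈ Finset.Icc 1 J, n x j / N x (j - 1))
      ≤ (1 + 1 / α) * M + (1 + 1 / α) * M * Real.log (T / M) := by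
    calc (∑ x, ∑ j ∈ Finset.Icc 1 J, n x j / N x (j - 1))
        ≤ ∑ x, (1 + 1/α) * (1 + Real.log (N x J)) :=
          Finset.sum_le_sum fun x _ => hperx x
      _ = (1 + 1/α) * M + (1 + 1/α) * ∑ x, Real.log (N x J) := by
          rw [← Finset.mul_sum, Finset.sum_add_distrib, Finset.sum_const,
            Finset.card_univ, hM, nsmul_eq_mul, mul_one, mul_add]
      _ ≤ (1 + 1 / α) * M + (1 + 1 / α) * M * Real.log (T / M) := by
          have := mul_le_mul_of_nonneg_left hjensen hC0
          linarith [this]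
  refine ⟨hmain, fun hE => ?_⟩
  have hlog1 : 1 ≤ Real.log (T / M) := by
    rw [← Real.log_exp 1]
    exact Real.log_le_log (Real.exp_pos 1) hE
  nlinarith [hmain, mul_le_mul_of_nonneg_left hlog1 (mul_nonneg hC0 (le_of_lt hMR))]
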